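/- Let a_1,…,a_t and c_1,…,c_t be positive integers with gcd(a_i, c_i) = 1 for all i, and suppose a_1 = a_2 = ⋯ = a_t = a for some a ≥ 1. Let R be the t×t matrix with rows: for i < t, a in position i, −a in position i+1, zeros elsewhere; last row (c_1,…,c_t). Then the Smith normal form of R is diag(1, a, a, …, a, a·S) where S = ∑_{i=1}^t c_i appears scaled in the last entry, i.e., R is equivalent over ℤ to diag(1, a, …, a, a·∑_{i=1}^t c_i). -/

import Mathlib

namespace Stmt19Aux

lemma sum_one {n k1 : ℕ} {f : ℕ → ℤ} (h1 : k1 < n)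
    (h0 : ∀ k, k < n → k ≠ k1 → f k = 0) :
    ∑ k ∈ Finset.range n, f k = f k1 :=
  Finset.sum_eq_single_of_mem k1 (Finset.mem_range.mpr h1)
    (fun b hb hne => h0 b (Finset.mem_range.mp hb) hne)

lemma sum_two {n k1 k2 : ℕ} {f : ℕ → ℤ} (h1 : k1 < n) (h2 : k2 < n) (h12 : k1 ≠ k2)
    (h0 : ∀ k, k < n → k ≠ k1 → k ≠ k2 → f k = 0) :
    ∑ k ∈ Finset.range n, f k = f k1 + f k2 := by
  have hsub : ({k1, k2} : Finset ℕ) ⊆ Finset.range n := by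
    intro z hz
    simp only [Finset.mem_insert, Finset.mem_singleton] at hz
    rcases hz with rfl | rfl <;> exact Finset.mem_range.mpr ‹_›
  rw [← Finset.sum_subset hsub (fun x hx hnx => by
    simp only [Finset.mem_insert, Finset.mem_singleton, not_or] at hnx
    exact h0 x (Finset.mem_range.mp hx) hnx.1 hnx.2)]
  exact Finset.sum_pair h12

lemma sum_three {n k1 k2 k3 : ℕ} {f : ℕ → ℤ} (h1 : k1 < n) (h2 : k2 < n) (h3 : k3 < n)
    (h12 : k1 ≠ k2) (h13 : k1 ≠ k3) (h23 : k2 ≠ k3)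
    (h0 : ∀ k, k < n → k ≠ k1 → k ≠ k2 → k ≠ k3 → f k = 0) :
    ∑ k ∈ Finset.range n, f k = f k1 + f k2 + f k3 := by
  have hsub : ({k1, k2, k3} : Finset ℕ) ⊆ Finset.range n := by
    intro z hz
    simp only [Finset.mem_insert, Finset.mem_singleton] at hz
    rcases hz with rfl | rfl | rfl <;> exact Finset.mem_range.mpr ‹_›
  rw [← Finset.sum_subset hsub (fun x hx hnx => by
    simp only [Finset.mem_insert, Finset.mem_singleton, not_or] at hnx
    exact h0 x (Finset.mem_range.mp hx) hnx.1 hnx.2.1 hnx.2.2)]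
  rw [Finset.sum_insert (by simp only [Finset.mem_insert, Finset.mem_singleton]; tauto),
    Finset.sum_pair h23, add_assoc]

def sfun (m : ℕ) (c' : ℕ → ℤ) (j : ℕ) : ℤ :=
  ∑ k ∈ Finset.range (m+2), if j ≤ k then c' k else 0

def Rf (m : ℕ) (a : ℤ) (c' : ℕ → ℤ) (i j : ℕ) : ℤ :=
  if i = m+1 then c' j else if j = i then a else if j = i+1 then -a else 0

def Pf (m : ℕ) (a x y : ℤ) (c' : ℕ → ℤ) (i j : ℕ) : ℤ :=
  if i = m+1 then (if j = m+1 then a else sfun m c' (j+1))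
  else if i = 0 then (if j = m then -x else if j = m+1 then y else 0)
  else if j+1 = i then -1 else 0

def Qf (m : ℕ) (y : ℤ) (c' : ℕ → ℤ) (i j : ℕ) : ℤ :=
  if j = 0 then (if i = m+1 then 1 else 0)
  else if j = m+1 then (if i = m+1 then 1 - y * sfun m c' 0 else 1)
  else if i = m+1 then 1 - y * sfun m c' j
  else if j ≤ i then 1 else 0

def Ef (m : ℕ) (a x y : ℤ) (c' : ℕ → ℤ) (i j : ℕ) : ℤ :=
  if i = m+1 then (if j = 0 then c' (m+1) else if j = m+1 then a*x*sfun m c' 0 else a*x*sfun m c' j)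
  else if i = m then (if j = 0 then -a else if j = m+1 then a*y*sfun m c' 0 else a*y*sfun m c' j)
  else if j = i+1 then -a else 0

def Pif (m : ℕ) (a x y : ℤ) (c' : ℕ → ℤ) (i j : ℕ) : ℤ :=
  if i = m+1 then (if j = 0 then c' (m+1) else if j = m+1 then x else x * sfun m c' j)
  else if i = m then (if j = 0 then -a else if j = m+1 then y else y * sfun m c' j)
  else if j = i+1 then -1 else 0

def Qif (m : ℕ) (y : ℤ) (c' : ℕ → ℤ) (i j : ℕ) : ℤ :=
  if i = 0 then (if j = m+1 then 1 else if j = m then y * sfun m c' m - 1 else y * c' j)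
  else if i = m+1 then (if j = 0 then 1 else 0)
  else if j = i then 1 else if j+1 = i then -1 else 0

def Df (m : ℕ) (a : ℤ) (c' : ℕ → ℤ) (i j : ℕ) : ℤ :=
  if i = j then (if i = 0 then 1 else if i = m+1 then a * sfun m c' 0 else a) else 0

lemma s_last (m : ℕ) (c' : ℕ → ℤ) : sfun m c' (m+1) = c' (m+1) := by
  rw [sfun, sum_one (k1 := m+1) (by omega)
    (fun k hk hne => by rw [if_neg (by omega)]), if_pos (by omega)]

lemma s_zero (m : ℕ) (c' : ℕ → ℤ) : sfun m c' 0 = ∑ k ∈ Finset.range (m+2), c' k := by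
  rw [sfun]
  exact Finset.sum_congr rfl (fun k _ => if_pos (Nat.zero_le k))

lemma s_m (m : ℕ) (c' : ℕ → ℤ) : sfun m c' m = c' m + c' (m+1) := by
  rw [sfun, sum_two (k1 := m) (k2 := m+1) (by omega) (by omega) (by omega)
    (fun k hk h1 h2 => by rw [if_neg (by omega)]), if_pos (by omega), if_pos (by omega)]

lemma L1 (m : ℕ) (a x y : ℤ) (c' : ℕ → ℤ) (hxy : x * a + y * c' (m+1) = 1)
    (i j : ℕ) (hi : i < m+2) (hj : j < m+2) :
    ∑ k ∈ Finset.range (m+2), Rf m a c' i k * Qf m y c' k j = Ef m a x y c' i j := by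
  by_cases hil : i = m+1
  · subst hil
    by_cases hj0 : j = 0
    · subst hj0
      rw [sum_one (k1 := m+1) (by omega)
        (fun k hk hne => by simp only [Rf, Qf]; split_ifs <;> first | omega | exact (‹False›).elim | ring1 | (subst_vars; ring1))]
      simp only [Rf, Qf, Ef]
      split_ifs <;> first | omega | exact (‹False›).elim | ring1 | (subst_vars; ring1)
    · by_cases hjl : j = m+1
      · subst hjl
        rw [Finset.sum_congr rfl (fun k hk => by
          simp only [Rf, Qf]
          split_ifs <;> first | omega | exact (‹False›).elim | ring1 | (subst_vars; ring1) :
          ∀ k ∈ Finset.range (m+2), Rf m a c' (m+1) k * Qf m y c' k (m+1)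
            = c' k + (if k = m+1 then -(y * sfun m c' 0 * c' k) else 0)),
          Finset.sum_add_distrib, Finset.sum_ite_eq',
          if_pos (Finset.mem_range.mpr (by omega : m+1 < m+2))]
        have hz : ∑ k ∈ Finset.range (m+2), c' k = sfun m c' 0 :=
          (Finset.sum_congr rfl (fun k _ => (if_pos (Nat.zero_le k)).symm))
        rw [hz]
        simp only [Ef]
        split_ifs <;>
          first | omega | exact (‹False›).elim | ring1 | (subst_vars; ring1) | linear_combination (-(sfun m c' 0)) * hxy
      · rw [Finset.sum_congr rfl (fun k hk => by
          simp only [Rf, Qf]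
          split_ifs <;> first | omega | exact (‹False›).elim | ring1 | (subst_vars; ring1) :
          ∀ k ∈ Finset.range (m+2), Rf m a c' (m+1) k * Qf m y c' k j
            = (if j ≤ k then c' k else 0) + (if k = m+1 then -(y * sfun m c' j * c' k) else 0)),
          Finset.sum_add_distrib, Finset.sum_ite_eq',
          if_pos (Finset.mem_range.mpr (by omega : m+1 < m+2))]
        have hsj : (∑ k ∈ Finset.range (m+2), if j ≤ k then c' k else 0) = sfun m c' j := rfl
        rw [hsj]
        simp only [Ef]
        split_ifs <;>
          first | omega | exact (‹False›).elim | ring1 | (subst_vars; ring1) | linear_combination (-(sfun m c' j)) * hxy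
  · rw [sum_two (k1 := i) (k2 := i+1) (by omega) (by omega) (by omega)
      (fun k hk h1 h2 => by simp only [Rf, Qf]; split_ifs <;> first | omega | exact (‹False›).elim | ring1 | (subst_vars; ring1))]
    simp only [Rf, Qf, Ef]
    split_ifs <;> first | omega | exact (‹False›).elim | ring1 | (subst_vars; ring1)

lemma L2 (m : ℕ) (a x y : ℤ) (c' : ℕ → ℤ) (hxy : x * a + y * c' (m+1) = 1)
    (i j : ℕ) (hi : i < m+2) (hj : j < m+2) :
    ∑ k ∈ Finset.range (m+2), Pf m a x y c' i k * Ef m a x y c' k j = Df m a c' i j := by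
  by_cases hil : i = m+1
  · subst hil
    by_cases hj0 : j = 0
    · subst hj0
      rw [sum_two (k1 := m) (k2 := m+1) (by omega) (by omega) (by omega)
        (fun k hk h1 h2 => by simp only [Pf, Ef]; split_ifs <;> first | omega | exact (‹False›).elim | ring1 | (subst_vars; ring1))]
      simp only [Pf, Ef, Df, s_last]
      split_ifs <;> first | omega | exact (‹False›).elim | ring1 | (subst_vars; ring1)
    · by_cases hjl : j = m+1
      · subst hjl
        rw [sum_two (k1 := m) (k2 := m+1) (by omega) (by omega) (by omega)
          (fun k hk h1 h2 => by simp only [Pf, Ef]; split_ifs <;> first | omega | exact (‹False›).elim | ring1 | (subst_vars; ring1))]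
        simp only [Pf, Ef, Df, s_last]
        split_ifs <;>
          first | omega | exact (‹False›).elim | ring1 | (subst_vars; ring1) | linear_combination (a * sfun m c' 0) * hxy
      · obtain ⟨j', rfl⟩ : ∃ j', j = j'+1 := ⟨j - 1, by omega⟩
        rw [sum_three (k1 := j') (k2 := m) (k3 := m+1) (by omega) (by omega) (by omega)
          (by omega) (by omega) (by omega)
          (fun k hk h1 h2 h3 => by simp only [Pf, Ef]; split_ifs <;> first | omega | exact (‹False›).elim | ring1 | (subst_vars; ring1))]
        simp only [Pf, Ef, Df, s_last]
        split_ifs <;>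
          first | omega | exact (‹False›).elim | ring1 | (subst_vars; ring1) | linear_combination (a * sfun m c' (j'+1)) * hxy
  · by_cases hi0 : i = 0
    · subst hi0
      rw [sum_two (k1 := m) (k2 := m+1) (by omega) (by omega) (by omega)
        (fun k hk h1 h2 => by simp only [Pf, Ef]; split_ifs <;> first | omega | exact (‹False›).elim | ring1 | (subst_vars; ring1))]
      simp only [Pf, Ef, Df]
      split_ifs <;> first | omega | exact (‹False›).elim | ring1 | (subst_vars; ring1) | linear_combination hxy | (subst_vars; linear_combination hxy)
    · obtain ⟨i', rfl⟩ : ∃ i', i = i'+1 := ⟨i - 1, by omega⟩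
      rw [sum_one (k1 := i') (by omega)
        (fun k hk h1 => by simp only [Pf, Ef]; split_ifs <;> first | omega | exact (‹False›).elim | ring1 | (subst_vars; ring1))]
      simp only [Pf, Ef, Df]
      split_ifs <;> first | omega | exact (‹False›).elim | ring1 | (subst_vars; ring1)

lemma L3 (m : ℕ) (a x y : ℤ) (c' : ℕ → ℤ) (hxy : x * a + y * c' (m+1) = 1)
    (i j : ℕ) (hi : i < m+2) (hj : j < m+2) :
    ∑ k ∈ Finset.range (m+2), Pf m a x y c' i k * Pif m a x y c' k j
      = if i = j then 1 else 0 := by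
  by_cases hil : i = m+1
  · subst hil
    by_cases hj0 : j = 0
    · subst hj0
      rw [sum_two (k1 := m) (k2 := m+1) (by omega) (by omega) (by omega)
        (fun k hk h1 h2 => by simp only [Pf, Pif]; split_ifs <;> first | omega | exact (‹False›).elim | ring1 | (subst_vars; ring1))]
      simp only [Pf, Pif, s_last]
      split_ifs <;> first | omega | exact (‹False›).elim | ring1 | (subst_vars; ring1)
    · by_cases hjl : j = m+1
      · subst hjl
        rw [sum_two (k1 := m) (k2 := m+1) (by omega) (by omega) (by omega)
          (fun k hk h1 h2 => by simp only [Pf, Pif]; split_ifs <;> first | omega | exact (‹False›).elim | ring1 | (subst_vars; ring1))]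
        simp only [Pf, Pif, s_last]
        split_ifs <;> first | omega | exact (‹False›).elim | ring1 | (subst_vars; ring1) | linear_combination hxy
      · obtain ⟨j', rfl⟩ : ∃ j', j = j'+1 := ⟨j - 1, by omega⟩
        rw [sum_three (k1 := j') (k2 := m) (k3 := m+1) (by omega) (by omega) (by omega)
          (by omega) (by omega) (by omega)
          (fun k hk h1 h2 h3 => by simp only [Pf, Pif]; split_ifs <;> first | omega | exact (‹False›).elim | ring1 | (subst_vars; ring1))]
        simp only [Pf, Pif, s_last]
        split_ifs <;>
          first | omega | exact (‹False›).elim | ring1 | (subst_vars; ring1) | linear_combination (sfun m c' (j'+1)) * hxy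
  · by_cases hi0 : i = 0
    · subst hi0
      rw [sum_two (k1 := m) (k2 := m+1) (by omega) (by omega) (by omega)
        (fun k hk h1 h2 => by simp only [Pf, Pif]; split_ifs <;> first | omega | exact (‹False›).elim | ring1 | (subst_vars; ring1))]
      simp only [Pf, Pif]
      split_ifs <;> first | omega | exact (‹False›).elim | ring1 | (subst_vars; ring1) | linear_combination hxy | (subst_vars; linear_combination hxy)
    · obtain ⟨i', rfl⟩ : ∃ i', i = i'+1 := ⟨i - 1, by omega⟩
      rw [sum_one (k1 := i') (by omega)
        (fun k hk h1 => by simp only [Pf, Pif]; split_ifs <;> first | omega | exact (‹False›).elim | ring1 | (subst_vars; ring1))]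
      simp only [Pf, Pif]
      split_ifs <;> first | omega | exact (‹False›).elim | ring1 | (subst_vars; ring1)

lemma L4 (m : ℕ) (y : ℤ) (c' : ℕ → ℤ)
    (i j : ℕ) (hi : i < m+2) (hj : j < m+2) :
    ∑ k ∈ Finset.range (m+2), Qif m y c' i k * Qf m y c' k j
      = if i = j then 1 else 0 := by
  by_cases hi0 : i = 0
  · subst hi0
    by_cases hj0 : j = 0
    · subst hj0
      rw [sum_one (k1 := m+1) (by omega)
        (fun k hk h1 => by simp only [Qif, Qf]; split_ifs <;> first | omega | exact (‹False›).elim | ring1 | (subst_vars; ring1))]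
      simp only [Qif, Qf]
      split_ifs <;> first | omega | exact (‹False›).elim | ring1 | (subst_vars; ring1)
    · by_cases hjl : j = m+1
      · subst hjl
        rw [Finset.sum_congr rfl (fun k hk => by
            simp only [Qif, Qf]
            split_ifs <;> first | omega | exact (‹False›).elim | ring1 | (subst_vars; ring1) :
          ∀ k ∈ Finset.range (m+2), Qif m y c' 0 k * Qf m y c' k (m+1)
            = y * c' k + ((if k = m then y * sfun m c' m - 1 - y * c' m else 0)
              + (if k = m+1 then 1 - y * sfun m c' 0 - y * c' (m+1) else 0))),
          Finset.sum_add_distrib, Finset.sum_add_distrib, Finset.sum_ite_eq',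
          Finset.sum_ite_eq', if_pos (Finset.mem_range.mpr (by omega : m < m+2)),
          if_pos (Finset.mem_range.mpr (by omega : m+1 < m+2)), ← Finset.mul_sum, ← s_zero,
          s_m, if_neg (by omega : ¬(0:ℕ) = m+1)]
        ring
      · rw [Finset.sum_congr rfl (fun k hk => by
            simp only [Qif, Qf]
            split_ifs <;> first | omega | exact (‹False›).elim | ring1 | (subst_vars; ring1) :
          ∀ k ∈ Finset.range (m+2), Qif m y c' 0 k * Qf m y c' k j
            = (if j ≤ k then y * c' k else 0) + ((if k = m then y * sfun m c' m - 1 - y * c' m else 0)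
              + (if k = m+1 then 1 - y * sfun m c' j - y * c' (m+1) else 0))),
          Finset.sum_add_distrib, Finset.sum_add_distrib, Finset.sum_ite_eq',
          Finset.sum_ite_eq', if_pos (Finset.mem_range.mpr (by omega : m < m+2)),
          if_pos (Finset.mem_range.mpr (by omega : m+1 < m+2))]
        have hy : (∑ k ∈ Finset.range (m+2), if j ≤ k then y * c' k else 0)
            = y * sfun m c' j := by
          rw [sfun, Finset.mul_sum]
          exact Finset.sum_congr rfl (fun k _ => by split_ifs <;> ring)
        rw [hy, s_m, if_neg (by omega : ¬(0:ℕ) = j)]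
        ring
  · by_cases hil : i = m+1
    · subst hil
      rw [sum_one (k1 := 0) (by omega)
        (fun k hk h1 => by simp only [Qif, Qf]; split_ifs <;> first | omega | exact (‹False›).elim | ring1 | (subst_vars; ring1))]
      simp only [Qif, Qf]
      split_ifs <;> first | omega | exact (‹False›).elim | ring1 | (subst_vars; ring1)
    · obtain ⟨i', rfl⟩ : ∃ i', i = i'+1 := ⟨i - 1, by omega⟩
      rw [sum_two (k1 := i') (k2 := i'+1) (by omega) (by omega) (by omega)
        (fun k hk h1 h2 => by simp only [Qif, Qf]; split_ifs <;> first | omega | exact (‹False›).elim | ring1 | (subst_vars; ring1))]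
      simp only [Qif, Qf]
      split_ifs <;> first | omega | exact (‹False›).elim | ring1 | (subst_vars; ring1)

end Stmt19Aux


open Stmt19Aux

theorem stmt_19 (t : ℕ) (ht : 2 ≤ t) (a : ℤ) (ha : 1 ≤ a) (c : Fin t → ℤ)
    (hc : ∀ i, 1 ≤ c i) (hac : ∀ i, IsCoprime a (c i))
    (R : Matrix (Fin t) (Fin t) ℤ)
    (hR : ∀ i j : Fin t, R i j =
      if (i : ℕ) = t - 1 then c j
      else if j = i then a
      else if (j : ℕ) = (i : ℕ) + 1 then -a else 0) :
    ∃ P Q : Matrix (Fin t) (Fin t) ℤ, IsUnit P.det ∧ IsUnit Q.det ∧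
      P * R * Q = Matrix.diagonal (fun i : Fin t =>
        if (i : ℕ) = 0 then 1
        else if (i : ℕ) = t - 1 then a * ∑ l, c l
        else a) := by
  obtain ⟨m, rfl⟩ : ∃ m, t = m + 2 := ⟨t - 2, by omega⟩
  classical
  set c' : ℕ → ℤ := fun k => if h : k < m + 2 then c ⟨k, h⟩ else 0 with hc'def
  have hcc : ∀ j : Fin (m+2), c' (j : ℕ) = c j := by
    intro j
    rw [hc'def]
    simp only [j.isLt, dif_pos, Fin.eta]
  obtain ⟨x, y, hxy0⟩ := hac ⟨m+1, by omega⟩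
  have hxy : x * a + y * c' (m+1) = 1 := by
    rw [show c' (m+1) = c ⟨m+1, by omega⟩ from hcc ⟨m+1, by omega⟩]
    exact hxy0
  have hmul : ∀ (F G H : ℕ → ℕ → ℤ),
      (∀ i j, i < m+2 → j < m+2 → ∑ k ∈ Finset.range (m+2), F i k * G k j = H i j) →
      (Matrix.of fun i j : Fin (m+2) => F (i:ℕ) (j:ℕ)) *
        (Matrix.of fun i j : Fin (m+2) => G (i:ℕ) (j:ℕ)) =
        (Matrix.of fun i j : Fin (m+2) => H (i:ℕ) (j:ℕ)) := by
    intro F G H h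
    ext i j
    rw [Matrix.mul_apply]
    simp only [Matrix.of_apply]
    rw [Fin.sum_univ_eq_sum_range (fun k => F (i:ℕ) k * G k (j:ℕ)) (m+2)]
    exact h _ _ i.isLt j.isLt
  have hone : (Matrix.of fun i j : Fin (m+2) => if (i:ℕ) = (j:ℕ) then (1:ℤ) else 0)
      = (1 : Matrix (Fin (m+2)) (Fin (m+2)) ℤ) := by
    ext i j
    simp only [Matrix.of_apply, Matrix.one_apply, Fin.val_inj]
  have hRe : R = Matrix.of fun i j : Fin (m+2) => Rf m a c' (i:ℕ) (j:ℕ) := by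
    ext i j
    rw [hR i j]
    simp only [Matrix.of_apply, Rf]
    by_cases h : (i:ℕ) = m+1
    · rw [if_pos (show (i:ℕ) = m+2-1 from h), if_pos h, hcc]
    · rw [if_neg (show ¬(i:ℕ) = m+2-1 from h), if_neg h]
      by_cases h2 : j = i
      · rw [if_pos h2, if_pos (Fin.ext_iff.mp h2)]
      · rw [if_neg h2, if_neg (fun hh => h2 (Fin.ext hh))]
  refine ⟨Matrix.of (fun i j : Fin (m+2) => Pf m a x y c' (i:ℕ) (j:ℕ)),
          Matrix.of (fun i j : Fin (m+2) => Qf m y c' (i:ℕ) (j:ℕ)), ?_, ?_, ?_⟩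
  · have h3 := hmul _ _ _ (L3 m a x y c' hxy)
    rw [hone] at h3
    exact IsUnit.of_mul_eq_one _ (by rw [← Matrix.det_mul, h3, Matrix.det_one])
  · have h4 := hmul _ _ _ (L4 m y c')
    rw [hone] at h4
    exact IsUnit.of_mul_eq_one _
      (by rw [mul_comm, ← Matrix.det_mul, h4, Matrix.det_one])
  · rw [hRe, Matrix.mul_assoc, hmul _ _ _ (L1 m a x y c' hxy),
      hmul _ _ _ (L2 m a x y c' hxy)]
    have hs : (∑ l, c l) = sfun m c' 0 := by
      rw [s_zero, ← Fin.sum_univ_eq_sum_range (fun k => c' k) (m+2)]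
      exact Finset.sum_congr rfl (fun l _ => (hcc l).symm)
    ext i j
    rw [Matrix.of_apply, Matrix.diagonal_apply, hs, show m + 2 - 1 = m + 1 from rfl]
    simp only [Df]
    by_cases h : i = j
    · rw [if_pos (Fin.ext_iff.mp h), if_pos h]
    · rw [if_neg (fun hh => h (Fin.ext hh)), if_neg h]
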